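/- arXiv:1511.00178 — 4 statements merged into one kernel-verified Lean document; each statement's English description precedes it below -/
import Mathlib

section
/- Let μ be a finite measure on a measurable space X, let M > 0, and let f, f_1, f_2, … : X → ℝ be measurable functions with 0 ≤ f_i ≤ M for all i and 0 ≤ f ≤ M. Assume f_i → f weakly in L^1(μ), i.e. ∫_X f_i g dμ → ∫_X f g dμ for every bounded measurable g : X → ℝ. Then liminf_{i→∞} ∫_X f_i log f_i dμ ≥ ∫_X f log f dμ, where the integrand is interpreted with the convention 0·log 0 = 0. -/
open MeasureTheory Filter Real

/-- Convexity inequality for `s ↦ s * log s`: tangent line at `t > 0` lies below. -/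
lemma entropy_key_ineq (s t : ℝ) (hs : 0 ≤ s) (ht : 0 < t) :
    s * Real.log t + s - t ≤ s * Real.log s := by
  rcases eq_or_lt_of_le hs with h | h
  · simp [← h]
    linarith
  · have hts : 0 < t / s := div_pos ht h
    have h1 : Real.log (t / s) ≤ t / s - 1 := Real.log_le_sub_one_of_pos hts
    have h2 : Real.log (t / s) = Real.log t - Real.log s := Real.log_div ht.ne' h.ne'
    have h3 : s * (Real.log t - Real.log s) ≤ s * (t / s - 1) := by
      rw [← h2]; exact mul_le_mul_of_nonneg_left h1 h.le
    have h4 : s * (t / s - 1) = t - s := by field_simp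
    nlinarith

/-- **Lower semicontinuity of the entropy under weak `L¹` convergence**
(Lemma of Chen–Li–Păun). If `f i` are measurable functions with `0 ≤ f i ≤ M`, converging
weakly in `L¹(μ)` (for a finite measure `μ`) to a function `f` with `0 ≤ f ≤ M`, then
`liminf_i ∫ f i * log (f i) dμ ≥ ∫ f * log f dμ` (with the convention `0 * log 0 = 0`,
which holds automatically since `Real.log 0 = 0`). -/
theorem entropy_lower_semicontinuous
    {X : Type*} [MeasurableSpace X] (μ : Measure X) [IsFiniteMeasure μ]
    (M : ℝ) (hM : 0 < M)
    (f : X → ℝ) (F : ℕ → X → ℝ)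
    (hf_meas : Measurable f) (hF_meas : ∀ i, Measurable (F i))
    (hf_bd : ∀ x, 0 ≤ f x ∧ f x ≤ M)
    (hF_bd : ∀ i x, 0 ≤ F i x ∧ F i x ≤ M)
    (hweak : ∀ g : X → ℝ, Measurable g → (∃ K : ℝ, ∀ x, |g x| ≤ K) →
      Tendsto (fun i => ∫ x, F i x * g x ∂μ) atTop (nhds (∫ x, f x * g x ∂μ))) :
    ∫ x, f x * Real.log (f x) ∂μ ≤
      Filter.liminf (fun i => ∫ x, F i x * Real.log (F i x) ∂μ) atTop := by
  classical
  set C := (μ Set.univ).toReal with hC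
  have hC0 : 0 ≤ C := ENNReal.toReal_nonneg
  -- a uniform bound for the entropy integrand
  obtain ⟨s₀, hs₀mem, hs₀⟩ := isCompact_Icc.exists_isMaxOn (Set.nonempty_Icc.2 hM.le)
    ((Real.continuous_mul_log.abs).continuousOn :
      ContinuousOn (fun s => |s * Real.log s|) (Set.Icc 0 M))
  set B := |s₀ * Real.log s₀| with hB
  have hBent : ∀ s, 0 ≤ s → s ≤ M → |s * Real.log s| ≤ B := fun s h1 h2 => hs₀ ⟨h1, h2⟩
  -- generic integrability of bounded measurable functions
  have int_bdd : ∀ (h : X → ℝ) (K : ℝ), Measurable h → (∀ x, |h x| ≤ K) → Integrable h μ := by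
    intro h K hm hb
    exact (integrable_const K).mono' hm.aestronglyMeasurable
      (Filter.Eventually.of_forall fun x => by simpa [Real.norm_eq_abs] using hb x)
  have int_ent : ∀ (h : X → ℝ), Measurable h → (∀ x, 0 ≤ h x ∧ h x ≤ M) →
      Integrable (fun x => h x * Real.log (h x)) μ := by
    intro h hm hb
    exact int_bdd _ B (hm.mul (Real.measurable_log.comp hm))
      (fun x => hBent _ (hb x).1 (hb x).2)
  set a : ℕ → ℝ := fun i => ∫ x, F i x * Real.log (F i x) ∂μ with ha
  have ha_bdd : Filter.IsBoundedUnder (· ≥ ·) atTop a := by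
    refine Filter.isBoundedUnder_of ⟨-(B * C), fun i => ?_⟩
    have h1 : -(B * C) = ∫ _ : X, (-B : ℝ) ∂μ := by
      simp [integral_const, smul_eq_mul, hC, Measure.real] <;> ring
    rw [ge_iff_le, h1]
    refine integral_mono (integrable_const _) (int_ent (F i) (hF_meas i) (hF_bd i)) fun x => ?_
    exact (abs_le.1 (hBent _ (hF_bd i x).1 (hF_bd i x).2)).1
  refine le_of_forall_pos_le_add ?_
  intro δ hδ
  set ε := δ / (C + 1) with hε
  have hε0 : 0 < ε := div_pos hδ (by linarith)
  set t : X → ℝ := fun x => max (f x) ε with ht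
  have ht_meas : Measurable t := hf_meas.max measurable_const
  have ht_pos : ∀ x, 0 < t x := fun x => lt_of_lt_of_le hε0 (le_max_right _ _)
  have ht_le : ∀ x, t x ≤ max M ε := fun x => max_le_max (hf_bd x).2 le_rfl
  set g : X → ℝ := fun x => Real.log (t x) + 1 with hg
  have hg_meas : Measurable g := (Real.measurable_log.comp ht_meas).add measurable_const
  set K := |Real.log ε| + |Real.log (max M ε)| + 1 with hK
  have hg_bd : ∀ x, |g x| ≤ K := by
    intro x
    have h1 : Real.log ε ≤ Real.log (t x) := Real.log_le_log hε0 (le_max_right _ _)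
    have h2 : Real.log (t x) ≤ Real.log (max M ε) := Real.log_le_log (ht_pos x) (ht_le x)
    have h3 := neg_abs_le (Real.log ε)
    have h4 := le_abs_self (Real.log (max M ε))
    have h5 := abs_nonneg (Real.log ε)
    have h6 := abs_nonneg (Real.log (max M ε))
    rw [abs_le]
    constructor <;> simp only [hg, hK] <;> linarith
  -- integrability facts
  have int_t : Integrable t μ := by
    refine int_bdd t (max M ε) ht_meas fun x => abs_le.2 ⟨?_, ht_le x⟩
    have := ht_pos x
    have : (0:ℝ) < max M ε := lt_of_lt_of_le hε0 (le_max_right _ _)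
    linarith [(ht_pos x).le]
  have hK0 : 0 ≤ K := by positivity
  have int_Fg : ∀ i, Integrable (fun x => F i x * g x) μ := by
    intro i
    refine int_bdd _ (M * K) ((hF_meas i).mul hg_meas) fun x => ?_
    rw [abs_mul]
    exact mul_le_mul (by rw [abs_of_nonneg (hF_bd i x).1]; exact (hF_bd i x).2) (hg_bd x)
      (abs_nonneg _) hM.le
  have int_fg : Integrable (fun x => f x * g x) μ := by
    refine int_bdd _ (M * K) (hf_meas.mul hg_meas) fun x => ?_
    rw [abs_mul]
    exact mul_le_mul (by rw [abs_of_nonneg (hf_bd x).1]; exact (hf_bd x).2) (hg_bd x)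
      (abs_nonneg _) hM.le
  -- key step: lower bound for each entropy integral
  have hstep : ∀ i, (∫ x, F i x * g x ∂μ) - ∫ x, t x ∂μ ≤ a i := by
    intro i
    rw [← integral_sub (int_Fg i) int_t]
    refine integral_mono ((int_Fg i).sub int_t) (int_ent (F i) (hF_meas i) (hF_bd i)) fun x => ?_
    have hk := entropy_key_ineq (F i x) (t x) (hF_bd i x).1 (ht_pos x)
    have hexp : F i x * g x = F i x * Real.log (t x) + F i x := by simp only [hg]; ring
    simp only [Pi.sub_apply]
    linarith
  set b : ℕ → ℝ := fun i => (∫ x, F i x * g x ∂μ) - ∫ x, t x ∂μ with hb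
  have hb_tendsto : Tendsto b atTop (nhds ((∫ x, f x * g x ∂μ) - ∫ x, t x ∂μ)) :=
    (hweak g hg_meas ⟨K, hg_bd⟩).sub tendsto_const_nhds
  have hlim : (∫ x, f x * g x ∂μ) - ∫ x, t x ∂μ ≤ Filter.liminf a atTop := by
    have ha_ub : Filter.IsBoundedUnder (· ≤ ·) atTop a := by
      refine Filter.isBoundedUnder_of ⟨B * C, fun i => ?_⟩
      have h1 : B * C = ∫ _ : X, (B : ℝ) ∂μ := by
        simp [integral_const, smul_eq_mul, hC, Measure.real] <;> ring
      rw [h1]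
      refine integral_mono (int_ent (F i) (hF_meas i) (hF_bd i)) (integrable_const _) fun x => ?_
      exact le_trans (le_abs_self _) (hBent _ (hF_bd i x).1 (hF_bd i x).2)
    rw [← hb_tendsto.liminf_eq]
    exact Filter.liminf_le_liminf (Filter.Eventually.of_forall hstep)
      hb_tendsto.isBoundedUnder_ge ha_ub.isCoboundedUnder_ge
  -- pointwise bound for the limit function
  have hpt : ∀ x, f x * Real.log (f x) ≤ f x * g x - t x + ε := by
    intro x
    rcases le_or_gt ε (f x) with h | h
    · have htx : t x = f x := max_eq_left h
      have : f x * g x - t x = f x * Real.log (f x) := by simp only [hg, htx]; ring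
      linarith [hε0.le]
    · have htx : t x = ε := max_eq_right h.le
      rcases eq_or_lt_of_le (hf_bd x).1 with h0 | h0
      · rw [← h0]; simp [htx]
      · have hlog : Real.log (f x) ≤ Real.log ε := Real.log_le_log h0 h.le
        have hmul : f x * Real.log (f x) ≤ f x * Real.log ε :=
          mul_le_mul_of_nonneg_left hlog h0.le
        have hexp : f x * g x - t x + ε = f x * Real.log ε + f x := by
          simp only [hg, htx]; ring
        linarith [h0.le]
  have hint : ∫ x, f x * Real.log (f x) ∂μ ≤
      ((∫ x, f x * g x ∂μ) - ∫ x, t x ∂μ) + ε * C := by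
    have h1 : ∫ x, f x * Real.log (f x) ∂μ ≤ ∫ x, (f x * g x - t x + ε) ∂μ :=
      integral_mono (int_ent f hf_meas hf_bd) ((int_fg.sub int_t).add (integrable_const ε))
        hpt
    have h2 : ∫ x, (f x * g x - t x + ε) ∂μ =
        ((∫ x, f x * g x ∂μ) - ∫ x, t x ∂μ) + ε * C := by
      have intsub : Integrable (fun x => f x * g x - t x) μ := int_fg.sub int_t
      rw [integral_add intsub (integrable_const ε),
        integral_sub int_fg int_t, integral_const]
      simp [smul_eq_mul, hC, Measure.real] <;> ring
    linarith
  have hεC : ε * C ≤ δ := by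
    rw [hε, div_mul_eq_mul_div, div_le_iff₀ (by linarith : (0:ℝ) < C + 1)]
    nlinarith
  linarith
end

section
/- Let 0 < β < 1 and C > 0, and let u : ℂ → ℝ be a measurable function with 0 ≤ u(ζ) ≤ C‖ζ‖^{2β−2} for all ζ ≠ 0. Let ρ : ℂ → ℝ be a nonnegative bounded measurable function supported in the closed unit disk with ∫_ℂ ρ dλ = 1, and for δ > 0 set u_δ(z) = ∫_ℂ u(z − δ w) ρ(w) dλ(w). Then there exists a constant C′, depending only on β, C and sup ρ (and not on δ or z), such that u_δ(z) ≤ C′ δ^{2β−2} for every z ∈ ℂ with ‖z‖ < 3δ. -/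
open Filter Real MeasureTheory

lemma abs_rpow_integrableOn {q : ℝ} (hq : -1 < q) :
    IntegrableOn (fun x : ℝ => |x| ^ q) (Set.Ioc (-5 : ℝ) 5) := by
  have h1 : IntervalIntegrable (fun x : ℝ => |x| ^ q) volume 0 5 := by
    have := intervalIntegral.intervalIntegrable_rpow' (a := 0) (b := 5) hq
    rw [intervalIntegrable_iff] at this ⊢
    refine this.congr_fun ?_ measurableSet_uIoc
    intro x hx
    rw [Set.uIoc_of_le (by norm_num : (0:ℝ) ≤ 5)] at hx
    simp only []; rw [abs_of_pos hx.1]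
  have h2 : IntervalIntegrable (fun x : ℝ => |x| ^ q) volume (-5) 0 := by
    have := (IntervalIntegrable.iff_comp_neg).mp h1
    simpa using this.symm
  have h3 := h2.trans h1
  rw [intervalIntegrable_iff, Set.uIoc_of_le (by norm_num : (-5:ℝ) ≤ 5)] at h3
  exact h3

lemma measurable_norm_rpow_complex (p : ℝ) (hp0 : p ≠ 0) :
    Measurable (fun v : ℂ => ‖v‖ ^ p) := by
  have : (fun v : ℂ => ‖v‖ ^ p) = Set.piecewise ({0} : Set ℂ) (fun _ => 0)
      (fun v => Real.exp (Real.log ‖v‖ * p)) := by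
    ext v
    by_cases hv : v = 0
    · simp [hv, Real.zero_rpow hp0]
    · rw [Set.piecewise_eq_of_notMem _ _ _ (by simpa using hv)]
      exact Real.rpow_def_of_pos (norm_pos_iff.mpr hv) p
  rw [this]
  exact Measurable.piecewise (measurableSet_singleton 0) measurable_const
    (Real.measurable_exp.comp ((Real.measurable_log.comp measurable_norm).mul_const p))

lemma norm_rpow_integrableOn_closedBall {p : ℝ} (hp2 : -2 < p) (hp0 : p < 0) :
    IntegrableOn (fun v : ℂ => ‖v‖ ^ p) (Metric.closedBall (0 : ℂ) 4) := by
  set q : ℝ := p / 2 with hqdef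
  have hq : -1 < q := by rw [hqdef]; linarith
  have hq0 : q < 0 := by rw [hqdef]; linarith
  -- product majorant on ℝ × ℝ
  have hprod : Integrable (fun z : ℝ × ℝ => |z.1| ^ q * |z.2| ^ q)
      ((volume.restrict (Set.Ioc (-5:ℝ) 5)).prod (volume.restrict (Set.Ioc (-5:ℝ) 5))) :=
    Integrable.mul_prod (abs_rpow_integrableOn hq) (abs_rpow_integrableOn hq)
  rw [Measure.prod_restrict] at hprod
  -- transfer to ℂ
  set e := Complex.measurableEquivRealProd with he
  set S : Set ℂ := e ⁻¹' (Set.Ioc (-5:ℝ) 5 ×ˢ Set.Ioc (-5:ℝ) 5) with hS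
  have hmp : MeasurePreserving e (volume.restrict S)
      (volume.restrict (Set.Ioc (-5:ℝ) 5 ×ˢ Set.Ioc (-5:ℝ) 5)) := by
    refine ⟨e.measurable, ?_⟩
    rw [← Complex.volume_preserving_equiv_real_prod.map_eq,
      Measure.restrict_map e.measurable (measurableSet_Ioc.prod measurableSet_Ioc)]
  have hG : IntegrableOn (fun v : ℂ => |v.re| ^ q * |v.im| ^ q) S := by
    have := (hmp.integrable_comp_emb e.measurableEmbedding).mpr hprod
    exact this
  -- closed ball is inside S
  have hsub : Metric.closedBall (0 : ℂ) 4 ⊆ S := by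
    intro v hv
    rw [Metric.mem_closedBall, dist_zero_right] at hv
    have h1 : |v.re| ≤ 4 := (Complex.abs_re_le_norm v).trans hv
    have h2 : |v.im| ≤ 4 := (Complex.abs_im_le_norm v).trans hv
    have hev : e v = (v.re, v.im) := rfl
    rw [hS, Set.mem_preimage, hev, Set.mem_prod]
    constructor
    · exact ⟨by linarith [(abs_le.mp h1).1], by linarith [(abs_le.mp h1).2]⟩
    · exact ⟨by linarith [(abs_le.mp h2).1], by linarith [(abs_le.mp h2).2]⟩
  have hGball : IntegrableOn (fun v : ℂ => |v.re| ^ q * |v.im| ^ q)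
      (Metric.closedBall (0 : ℂ) 4) := hG.mono_set hsub
  -- the null set where re or im vanishes
  have hnull : volume ({v : ℂ | v.re = 0} ∪ {v : ℂ | v.im = 0}) = 0 := by
    refine measure_union_null ?_ ?_
    · have : {v : ℂ | v.re = 0} = (LinearMap.ker Complex.reLm : Set ℂ) := by
        ext v; simp [LinearMap.mem_ker]
      rw [this]
      refine Measure.addHaar_submodule _ _ ?_
      intro h
      have : (1 : ℂ).re = 0 := by
        have := h ▸ (Submodule.mem_top (R := ℝ) (x := (1 : ℂ)))
        simpa [LinearMap.mem_ker] using this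
      simp at this
    · have : {v : ℂ | v.im = 0} = (LinearMap.ker Complex.imLm : Set ℂ) := by
        ext v; simp [LinearMap.mem_ker]
      rw [this]
      refine Measure.addHaar_submodule _ _ ?_
      intro h
      have : (Complex.I).im = 0 := by
        have := h ▸ (Submodule.mem_top (R := ℝ) (x := Complex.I))
        simpa [LinearMap.mem_ker] using this
      simp at this
  -- pointwise a.e. bound
  refine Integrable.mono' (hGball.const_mul ((2:ℝ)^q)) ?_ ?_
  · exact (measurable_norm_rpow_complex p hp0.ne).aestronglyMeasurable
  · refine ae_restrict_of_ae ?_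
    refine (measure_eq_zero_iff_ae_notMem.mp hnull).mono ?_
    intro v hv
    simp only [Set.mem_union, Set.mem_setOf_eq, not_or] at hv
    obtain ⟨hre, him⟩ := hv
    have hre' : 0 < |v.re| := abs_pos.mpr hre
    have him' : 0 < |v.im| := abs_pos.mpr him
    have hnv : 0 < ‖v‖ := by
      rw [norm_pos_iff]
      intro h; apply hre; rw [h]; simp
    have hlow : Real.sqrt (2 * |v.re| * |v.im|) ≤ ‖v‖ := by
      rw [show ‖v‖ = Real.sqrt (v.re ^ 2 + v.im ^ 2) from by
        rw [Complex.norm_def, Complex.normSq_apply]; ring_nf]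
      apply Real.sqrt_le_sqrt
      nlinarith [sq_nonneg (|v.re| - |v.im|), sq_abs v.re, sq_abs v.im]
    have hlow' : 0 < Real.sqrt (2 * |v.re| * |v.im|) :=
      Real.sqrt_pos.mpr (by positivity)
    have : ‖v‖ ^ p ≤ (Real.sqrt (2 * |v.re| * |v.im|)) ^ p :=
      Real.rpow_le_rpow_of_nonpos hlow' hlow hp0.le
    rw [Real.norm_eq_abs, abs_of_nonneg (Real.rpow_nonneg (norm_nonneg v) p)]
    refine this.trans ?_
    refine le_of_eq ?_
    rw [Real.sqrt_eq_rpow]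
    rw [← Real.rpow_mul (by positivity)]
    have hq' : 1 / 2 * p = q := by rw [hqdef]; ring
    rw [hq', Real.mul_rpow (by positivity) (abs_nonneg _),
      Real.mul_rpow (by norm_num) (abs_nonneg _)]
    simp [Pi.smul_apply, smul_eq_mul, mul_assoc]

/-- **Growth of the mollified conic density near the divisor** (part (a) of the paper's
Lemma on growth control of the smoothed geodesic). If `0 ≤ u(ζ) ≤ C‖ζ‖^{2β−2}` for `ζ ≠ 0`
and `u_δ(z) = ∫ u(z − δw) ρ(w) dλ(w)` is the δ-mollification of `u` by a kernel `ρ`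
supported in the closed unit disk, then there is a constant `C′` (independent of `δ` and of
the point) such that `u_δ(z) ≤ C′ δ^{2β−2}` whenever `‖z‖ < 3δ`. -/
theorem mollified_conic_density_near_divisor
    (β C : ℝ) (hβ0 : 0 < β) (hβ1 : β < 1) (hC : 0 < C)
    (u : ℂ → ℝ) (hu_meas : Measurable u) (hu_nonneg : ∀ ζ, 0 ≤ u ζ)
    (hu_bd : ∀ ζ : ℂ, ζ ≠ 0 → u ζ ≤ C * ‖ζ‖ ^ (2 * β - 2))
    (ρ : ℂ → ℝ) (hρ_meas : Measurable ρ) (hρ_nonneg : ∀ w, 0 ≤ ρ w)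
    (hρ_bd : ∃ M : ℝ, ∀ w, ρ w ≤ M)
    (hρ_supp : Function.support ρ ⊆ Metric.closedBall (0 : ℂ) 1)
    (hρ_int : ∫ w : ℂ, ρ w = 1) :
    ∃ C' : ℝ, ∀ δ : ℝ, 0 < δ → ∀ z : ℂ, ‖z‖ < 3 * δ →
      (∫ w : ℂ, u (z - δ • w) * ρ w) ≤ C' * δ ^ (2 * β - 2) := by
  obtain ⟨M, hM⟩ := hρ_bd
  have hM0 : 0 ≤ M := le_trans (hρ_nonneg 0) (hM 0)
  set p : ℝ := 2 * β - 2 with hpdef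
  have hp2 : -2 < p := by rw [hpdef]; linarith
  have hp0 : p < 0 := by rw [hpdef]; linarith
  have hK := norm_rpow_integrableOn_closedBall hp2 hp0
  set K : ℝ := ∫ v in Metric.closedBall (0:ℂ) 4, ‖v‖ ^ p with hKdef
  refine ⟨C * M * K, ?_⟩
  intro δ hδ z hz
  set a : ℂ := (δ⁻¹ : ℝ) • z with hadef
  have hza : z = (δ : ℝ) • a := by
    rw [hadef, smul_smul, mul_inv_cancel₀ hδ.ne', one_smul]
  have ha3 : ‖a‖ < 3 := by
    rw [hadef, norm_smul, Real.norm_eq_abs, abs_of_pos (inv_pos.mpr hδ)]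
    rw [inv_mul_lt_iff₀ hδ]
    linarith
  set ind : ℂ → ℝ := Set.indicator (Metric.closedBall (0:ℂ) 4) (fun v => ‖v‖ ^ p)
    with hinddef
  have hind_int : Integrable ind := (integrable_indicator_iff measurableSet_closedBall).2 hK
  have hind_nonneg : ∀ v, 0 ≤ ind v := fun v =>
    Set.indicator_nonneg (fun x _ => Real.rpow_nonneg (norm_nonneg x) p) v
  have hδp : 0 < δ ^ p := Real.rpow_pos_of_pos hδ p
  set g : ℂ → ℝ := fun w => (C * M * δ ^ p) * ind (w - a) with hgdef
  have hg_int : Integrable g := ((hind_int.comp_sub_right a).const_mul _)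
  have hgle : ∀ᵐ w : ℂ, u (z - (δ:ℝ) • w) * ρ w ≤ g w := by
    have hsing : volume ({a} : Set ℂ) = 0 := measure_singleton a
    filter_upwards [compl_mem_ae_iff.mpr hsing] with w hw
    have hwa : w ≠ a := by simpa using hw
    rcases eq_or_ne (ρ w) 0 with h | h
    · rw [h, mul_zero]
      have : 0 ≤ ind (w - a) := hind_nonneg _
      positivity
    · have hw1 : ‖w‖ ≤ 1 := by
        simpa using hρ_supp (Function.mem_support.mpr h)
      have hwmem : w - a ∈ Metric.closedBall (0 : ℂ) 4 := by
        rw [Metric.mem_closedBall, dist_zero_right]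
        calc ‖w - a‖ ≤ ‖w‖ + ‖a‖ := norm_sub_le _ _
          _ ≤ 4 := by linarith
      have hindeq : ind (w - a) = ‖w - a‖ ^ p := Set.indicator_of_mem hwmem _
      have hz0 : z - (δ:ℝ) • w = (δ:ℝ) • (a - w) := by
        rw [hza, ← smul_sub]
      have hzne : z - (δ:ℝ) • w ≠ 0 := by
        rw [hz0]
        exact smul_ne_zero hδ.ne' (sub_ne_zero.mpr (Ne.symm hwa))
      have hnorm : ‖z - (δ:ℝ) • w‖ = δ * ‖w - a‖ := by
        rw [hz0, norm_smul, Real.norm_eq_abs, abs_of_pos hδ, norm_sub_rev]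
      calc u (z - (δ:ℝ) • w) * ρ w
          ≤ (C * ‖z - (δ:ℝ) • w‖ ^ p) * M :=
            mul_le_mul (hu_bd _ hzne) (hM w) (hρ_nonneg w) (by positivity)
        _ = (C * M * δ ^ p) * ‖w - a‖ ^ p := by
            rw [hnorm, Real.mul_rpow hδ.le (norm_nonneg _)]; ring
        _ = g w := by rw [hgdef]; simp only []; rw [hindeq]
  calc (∫ w : ℂ, u (z - (δ:ℝ) • w) * ρ w) ≤ ∫ w : ℂ, g w :=
        integral_mono_of_nonneg
          (Eventually.of_forall fun w => mul_nonneg (hu_nonneg _) (hρ_nonneg _)) hg_int hgle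
    _ = (C * M * δ ^ p) * ∫ w : ℂ, ind (w - a) := integral_const_mul _ _
    _ = (C * M * δ ^ p) * K := by
        rw [integral_sub_right_eq_self ind a, hKdef,
          ← integral_indicator measurableSet_closedBall]
    _ = C * M * K * δ ^ p := by ring
end

section
/- Let 0 < β < 1 and C > 0, and let u : ℂ → ℝ be a measurable function with 0 ≤ u(ζ) ≤ C‖ζ‖^{2β−2} for all ζ ≠ 0. Let ρ : ℂ → ℝ be a nonnegative bounded measurable function supported in the closed unit disk with ∫_ℂ ρ dλ = 1, and for δ > 0 set u_δ(z) = ∫_ℂ u(z − δ w) ρ(w) dλ(w). Then there exists a constant C′, depending only on β and C (and not on δ or z), such that u_δ(z) ≤ C′ (‖z‖² + δ²)^{β−1} for every z ∈ ℂ with ‖z‖ ≥ 3δ. -/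
open Filter Real MeasureTheory

/-- **Growth of the mollified conic density away from the divisor** (part (b) of the paper's
Lemma on growth control of the smoothed geodesic). If `0 ≤ u(ζ) ≤ C‖ζ‖^{2β−2}` for `ζ ≠ 0`
and `u_δ(z) = ∫ u(z − δw) ρ(w) dλ(w)` is the δ-mollification of `u` by a kernel `ρ`
supported in the closed unit disk, then there is a constant `C′` (independent of `δ` and of
the point) such that `u_δ(z) ≤ C′ (‖z‖² + δ²)^{β−1}` whenever `‖z‖ ≥ 3δ`. -/
theorem mollified_conic_density_far_from_divisor
    (β C : ℝ) (hβ0 : 0 < β) (hβ1 : β < 1) (hC : 0 < C)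
    (u : ℂ → ℝ) (hu_meas : Measurable u) (hu_nonneg : ∀ ζ, 0 ≤ u ζ)
    (hu_bd : ∀ ζ : ℂ, ζ ≠ 0 → u ζ ≤ C * ‖ζ‖ ^ (2 * β - 2))
    (ρ : ℂ → ℝ) (hρ_meas : Measurable ρ) (hρ_nonneg : ∀ w, 0 ≤ ρ w)
    (hρ_bd : ∃ M : ℝ, ∀ w, ρ w ≤ M)
    (hρ_supp : Function.support ρ ⊆ Metric.closedBall (0 : ℂ) 1)
    (hρ_int : ∫ w : ℂ, ρ w = 1) :
    ∃ C' : ℝ, ∀ δ : ℝ, 0 < δ → ∀ z : ℂ, 3 * δ ≤ ‖z‖ →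
      (∫ w : ℂ, u (z - δ • w) * ρ w) ≤ C' * (‖z‖ ^ 2 + δ ^ 2) ^ (β - 1) := by
  obtain ⟨M, hM⟩ := hρ_bd
  have hρ_int' : Integrable ρ := by
    refine Integrable.mono'
      (g := (Metric.closedBall (0:ℂ) 1).indicator fun _ => M)
      ((integrableOn_const measure_closedBall_lt_top.ne).integrable_indicator
        measurableSet_closedBall)
      hρ_meas.aestronglyMeasurable ?_
    filter_upwards with w
    rw [Real.norm_eq_abs, abs_of_nonneg (hρ_nonneg w)]
    by_cases hw : w ∈ Metric.closedBall (0:ℂ) 1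
    · rw [Set.indicator_of_mem hw]; exact hM w
    · rw [Set.indicator_of_notMem hw]
      have : ρ w = 0 := by
        by_contra h; exact hw (hρ_supp h)
      simp [this]
  refine ⟨C * 9 ^ (1 - β), fun δ hδ z hz => ?_⟩
  set X := ‖z‖ ^ 2 + δ ^ 2 with hX
  have hXpos : 0 < X := by positivity
  have key : ∀ w : ℂ, u (z - δ • w) * ρ w ≤ (C * 9 ^ (1-β) * X ^ (β-1)) * ρ w := by
    intro w
    by_cases hw : ρ w = 0
    · simp [hw]
    have hw1 : ‖w‖ ≤ 1 := by simpa using hρ_supp hw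
    have hnorm : ‖z‖ - δ ≤ ‖z - δ • w‖ := by
      have h1 := norm_sub_norm_le z (δ • w)
      have h2 : ‖δ • w‖ ≤ δ := by
        rw [norm_smul, Real.norm_eq_abs, abs_of_pos hδ]
        nlinarith
      linarith
    have hzpos : 0 < ‖z‖ - δ := by linarith
    have hsq : X / 9 ≤ ‖z - δ • w‖ ^ 2 := by
      have h1 : (‖z‖ - δ)^2 ≤ ‖z - δ • w‖^2 := by nlinarith [norm_nonneg (z - δ • w)]
      nlinarith
    have hne : (z - δ • w) ≠ 0 := by
      intro h
      rw [h, norm_zero] at hnorm; linarith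
    have heq : ‖z - δ • w‖ ^ (2*β - 2) = (‖z - δ • w‖ ^ 2 : ℝ) ^ (β - 1) := by
      rw [← Real.rpow_natCast (‖z - δ • w‖) 2, ← Real.rpow_mul (norm_nonneg _)]
      norm_num
      congr 1
      ring
    have hmono : (‖z - δ • w‖ ^ 2 : ℝ) ^ (β - 1) ≤ (X/9 : ℝ) ^ (β-1) :=
      Real.rpow_le_rpow_of_nonpos (by positivity) hsq (by linarith)
    have hdiv : (X/9 : ℝ) ^ (β-1) = 9 ^ (1-β) * X ^ (β-1) := by
      rw [Real.div_rpow (le_of_lt hXpos) (by norm_num : (0:ℝ) ≤ 9),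
        show (1 - β) = -(β-1) by ring, Real.rpow_neg (by norm_num : (0:ℝ) ≤ 9)]
      field_simp
    have hub : u (z - δ • w) ≤ C * 9 ^ (1-β) * X ^ (β-1) := by
      calc u (z - δ • w) ≤ C * ‖z - δ • w‖ ^ (2*β-2) := hu_bd _ hne
        _ = C * (‖z - δ • w‖^2 : ℝ) ^ (β-1) := by rw [heq]
        _ ≤ C * ((X/9 : ℝ) ^ (β-1)) := by
            exact mul_le_mul_of_nonneg_left hmono (le_of_lt hC)
        _ = C * 9^(1-β) * X^(β-1) := by rw [hdiv]; ring
    have hρw : 0 ≤ ρ w := hρ_nonneg w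
    exact mul_le_mul_of_nonneg_right hub hρw
  calc ∫ w : ℂ, u (z - δ • w) * ρ w
      ≤ ∫ w : ℂ, (C * 9^(1-β) * X^(β-1)) * ρ w := by
        apply integral_mono_of_nonneg
        · filter_upwards with w
          exact mul_nonneg (hu_nonneg _) (hρ_nonneg w)
        · exact hρ_int'.const_mul _
        · filter_upwards with w; exact key w
    _ = C * 9^(1-β) * X^(β-1) := by rw [integral_const_mul, hρ_int, mul_one]
end

section
/- Let 0 < β < 1 and C > 0, and let u : ℂ → ℝ be a measurable function with 0 ≤ u(ζ) ≤ C‖ζ‖^{2β−2} for all ζ ≠ 0. Let ρ : ℂ → ℝ be a nonnegative bounded measurable function supported in the closed unit disk with ∫_ℂ ρ dλ = 1, and for δ > 0 set u_δ(z) = ∫_ℂ u(z − δ w) ρ(w) dλ(w). Then there exists a constant C″, depending only on β, C and sup ρ, such that for every δ > 0 and every z ∈ ℂ one has u_δ(z) · (‖z‖² + δ²)^{1−β} ≤ C″. -/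
open Filter Real MeasureTheory

lemma sqpow_rpow {x : ℝ} (c : ℝ) (hx : 0 ≤ x) : (x ^ 2) ^ c = x ^ (2 * c) := by
  rw [← Real.rpow_natCast x 2, ← Real.rpow_mul hx]
  norm_num

lemma aux_integrable_kernel {β : ℝ} (hβ0 : 0 < β) (hβ1 : β < 1) :
    Integrable ((Metric.closedBall (0:ℂ) 3).indicator fun v : ℂ => ‖v‖ ^ (2*β-2)) := by
  -- 1D integrability of |t|^(β-1) on [-3,3]
  have hβ' : (-1 : ℝ) < β - 1 := by linarith
  have hG : Integrable ((Set.Icc (0:ℝ) 3).indicator fun t : ℝ => |t| ^ (β-1)) := by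
    rw [integrable_indicator_iff measurableSet_Icc]
    have h0 : IntegrableOn (fun t : ℝ => t ^ (β-1)) (Set.Ioc (0:ℝ) 3) := by
      have := (intervalIntegral.intervalIntegrable_rpow' (a := 0) (b := 3) hβ').1
      simpa using this
    have h1 : IntegrableOn (fun t : ℝ => |t| ^ (β-1)) (Set.Ioc (0:ℝ) 3) := by
      refine h0.congr_fun (fun t ht => ?_) measurableSet_Ioc
      rw [abs_of_pos ht.1]
    rwa [integrableOn_Icc_iff_integrableOn_Ioc]
  set G : ℝ → ℝ := (Set.Icc (0:ℝ) 3).indicator fun t : ℝ => |t| ^ (β-1) with hGdef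
  have hGnonneg : ∀ t, 0 ≤ G t := fun t =>
    Set.indicator_nonneg (fun s _ => Real.rpow_nonneg (abs_nonneg s) _) t
  have hg : Integrable ((Set.Icc (-3:ℝ) 3).indicator fun t : ℝ => |t| ^ (β-1)) := by
    have hmeas : Measurable ((Set.Icc (-3:ℝ) 3).indicator fun t : ℝ => |t| ^ (β-1)) := by
      exact (measurable_norm.pow_const _).indicator measurableSet_Icc |>.mono le_rfl le_rfl
    refine Integrable.mono' (hG.add (hG.comp_neg)) hmeas.aestronglyMeasurable
      (Filter.Eventually.of_forall fun t => ?_)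
    have hnn : 0 ≤ (Set.Icc (-3:ℝ) 3).indicator (fun t : ℝ => |t| ^ (β-1)) t :=
      Set.indicator_nonneg (fun s _ => Real.rpow_nonneg (abs_nonneg s) _) t
    rw [Real.norm_eq_abs, abs_of_nonneg hnn]
    by_cases ht : t ∈ Set.Icc (-3:ℝ) 3
    · rw [Set.indicator_of_mem ht]
      rcases le_total 0 t with h | h
      · have hmem : t ∈ Set.Icc (0:ℝ) 3 := ⟨h, ht.2⟩
        have he := Set.indicator_of_mem hmem (fun t : ℝ => |t| ^ (β-1))
        simp only [Pi.add_apply, Function.comp_apply]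
        rw [hGdef]
        rw [he]
        linarith [hGnonneg (-t)]
      · have hmem : -t ∈ Set.Icc (0:ℝ) 3 := ⟨by linarith, by linarith [ht.1]⟩
        have he := Set.indicator_of_mem hmem (fun t : ℝ => |t| ^ (β-1))
        rw [abs_neg] at he
        simp only [Pi.add_apply, Function.comp_apply]
        rw [hGdef]
        rw [he]
        linarith [hGnonneg t]
    · rw [Set.indicator_of_notMem ht]
      have := hGnonneg t
      have := hGnonneg (-t)
      simp only [Pi.add_apply, Function.comp_apply]
      linarith
  set g : ℝ → ℝ := (Set.Icc (-3:ℝ) 3).indicator fun t : ℝ => |t| ^ (β-1) with hgdef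
  have hgnonneg : ∀ t, 0 ≤ g t := fun t =>
    Set.indicator_nonneg (fun s _ => Real.rpow_nonneg (abs_nonneg s) _) t
  -- 2D product
  have hF : Integrable (fun p : ℝ × ℝ => g p.1 * g p.2) := by
    rw [Measure.volume_eq_prod]
    exact hg.mul_prod hg
  have hΦ : Integrable (fun v : ℂ => g v.re * g v.im) := by
    have h := (Complex.volume_preserving_equiv_real_prod).integrable_comp_emb
      Complex.measurableEquivRealProd.measurableEmbedding
      (g := fun p : ℝ × ℝ => g p.1 * g p.2)
    exact (h.2 hF).congr (Filter.Eventually.of_forall fun v => rfl)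
  -- axes have measure zero
  have hre : volume {v : ℂ | v.re = 0} = 0 := by
    let S : Submodule ℝ ℂ :=
      { carrier := {v : ℂ | v.re = 0}
        add_mem' := fun ha hb => by simp_all [Complex.add_re]
        zero_mem' := by simp
        smul_mem' := fun c x hx => by simp_all [Complex.smul_re] }
    have hS : S ≠ ⊤ := by
      intro h
      have h1 : (1:ℂ) ∈ S := h ▸ Submodule.mem_top
      simp [S] at h1
    exact Measure.addHaar_submodule volume S hS
  have him : volume {v : ℂ | v.im = 0} = 0 := by
    let S : Submodule ℝ ℂ :=
      { carrier := {v : ℂ | v.im = 0}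
        add_mem' := fun ha hb => by simp_all [Complex.add_im]
        zero_mem' := by simp
        smul_mem' := fun c x hx => by simp_all [Complex.smul_im] }
    have hS : S ≠ ⊤ := by
      intro h
      have h1 : (Complex.I) ∈ S := h ▸ Submodule.mem_top
      simp [S] at h1
    exact Measure.addHaar_submodule volume S hS
  have hax : volume ({v : ℂ | v.re = 0} ∪ {v : ℂ | v.im = 0}) = 0 :=
    measure_union_null hre him
  -- a.e. bound
  have hmeas : Measurable ((Metric.closedBall (0:ℂ) 3).indicator fun v : ℂ => ‖v‖ ^ (2*β-2)) :=
    (measurable_norm.pow_const _).indicator measurableSet_closedBall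
  refine Integrable.mono' hΦ hmeas.aestronglyMeasurable ?_
  have : ∀ᵐ v : ℂ, v ∉ ({v : ℂ | v.re = 0} ∪ {v : ℂ | v.im = 0}) :=
    measure_eq_zero_iff_ae_notMem.mp hax
  filter_upwards [this] with v hv
  simp only [Set.mem_union, Set.mem_setOf_eq, not_or] at hv
  obtain ⟨hvre, hvim⟩ := hv
  have hnn : 0 ≤ (Metric.closedBall (0:ℂ) 3).indicator (fun v : ℂ => ‖v‖ ^ (2*β-2)) v :=
    Set.indicator_nonneg (fun s _ => Real.rpow_nonneg (norm_nonneg s) _) v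
  rw [Real.norm_eq_abs, abs_of_nonneg hnn]
  by_cases hball : v ∈ Metric.closedBall (0:ℂ) 3
  · rw [Set.indicator_of_mem hball]
    have hv3 : ‖v‖ ≤ 3 := by simpa [Complex.dist_eq] using hball
    have hre3 : |v.re| ≤ 3 := le_trans (Complex.abs_re_le_norm v) hv3
    have him3 : |v.im| ≤ 3 := le_trans (Complex.abs_im_le_norm v) hv3
    have hremem : v.re ∈ Set.Icc (-3:ℝ) 3 := ⟨neg_le_of_abs_le hre3, le_of_abs_le hre3⟩
    have himmem : v.im ∈ Set.Icc (-3:ℝ) 3 := ⟨neg_le_of_abs_le him3, le_of_abs_le him3⟩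
    rw [hgdef]
    rw [Set.indicator_of_mem hremem, Set.indicator_of_mem himmem]
    have h1 : 0 < |v.re| * |v.im| := by
      apply mul_pos <;> simpa [abs_pos]
    have h2 : |v.re| * |v.im| ≤ ‖v‖ ^ 2 := by
      rw [Complex.sq_norm, Complex.normSq_apply]
      nlinarith [abs_nonneg v.re, abs_nonneg v.im, sq_abs v.re, sq_abs v.im,
        sq_nonneg (|v.re| - |v.im|)]
    calc ‖v‖ ^ (2*β-2) = (‖v‖ ^ 2) ^ (β-1) := by
          rw [sqpow_rpow (β-1) (norm_nonneg v)]; ring_nf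
      _ ≤ (|v.re| * |v.im|) ^ (β-1) :=
          Real.rpow_le_rpow_of_nonpos h1 h2 (by linarith)
      _ = |v.re| ^ (β-1) * |v.im| ^ (β-1) :=
          Real.mul_rpow (abs_nonneg _) (abs_nonneg _)
  · rw [Set.indicator_of_notMem hball]
    exact mul_nonneg (hgnonneg _) (hgnonneg _)


/-- **Uniform bound on the mollified conic density** (combination of parts (a) and (b) of
the paper's growth Lemma, with the choice `ε′ = δ²`, used in the `C⁰` estimate).
If `0 ≤ u(ζ) ≤ C‖ζ‖^{2β−2}` for `ζ ≠ 0` and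
`u_δ(z) = ∫ u(z − δw) ρ(w) dλ(w)` is the δ-mollification of `u` by a kernel `ρ` supported in
the closed unit disk, then there is a constant `C″` (depending only on `β`, `C` and `sup ρ`)
such that `u_δ(z) · (‖z‖² + δ²)^{1−β} ≤ C″` for every `δ > 0` and every `z ∈ ℂ`. -/
theorem mollified_conic_density_uniform_bound
    (β C : ℝ) (hβ0 : 0 < β) (hβ1 : β < 1) (hC : 0 < C)
    (u : ℂ → ℝ) (hu_meas : Measurable u) (hu_nonneg : ∀ ζ, 0 ≤ u ζ)
    (hu_bd : ∀ ζ : ℂ, ζ ≠ 0 → u ζ ≤ C * ‖ζ‖ ^ (2 * β - 2))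
    (ρ : ℂ → ℝ) (hρ_meas : Measurable ρ) (hρ_nonneg : ∀ w, 0 ≤ ρ w)
    (hρ_bd : ∃ M : ℝ, ∀ w, ρ w ≤ M)
    (hρ_supp : Function.support ρ ⊆ Metric.closedBall (0 : ℂ) 1)
    (hρ_int : ∫ w : ℂ, ρ w = 1) :
    ∃ C'' : ℝ, ∀ δ : ℝ, 0 < δ → ∀ z : ℂ,
      (∫ w : ℂ, u (z - δ • w) * ρ w) * (‖z‖ ^ 2 + δ ^ 2) ^ (1 - β) ≤ C'' := by
  obtain ⟨M, hM⟩ := hρ_bd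
  have hM0 : 0 ≤ M := le_trans (hρ_nonneg 0) (hM 0)
  -- the singular kernel, integrable on the ball of radius 3
  set Hk : ℂ → ℝ := (Metric.closedBall (0:ℂ) 3).indicator fun v : ℂ => ‖v‖ ^ (2*β-2) with hHk
  have hHk_int : Integrable Hk := aux_integrable_kernel hβ0 hβ1
  have hHk_nonneg : ∀ v, 0 ≤ Hk v := fun v =>
    Set.indicator_nonneg (fun s _ => Real.rpow_nonneg (norm_nonneg s) _) v
  set K : ℝ := ∫ v : ℂ, Hk v with hKdef
  have hK0 : 0 ≤ K := integral_nonneg hHk_nonneg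
  -- ρ is integrable
  have hρ_int_able : Integrable ρ := by
    have h1 : IntegrableOn ρ (Metric.closedBall (0:ℂ) 1) :=
      Measure.integrableOn_of_bounded (measure_closedBall_lt_top).ne
        hρ_meas.aestronglyMeasurable
        (Filter.Eventually.of_forall fun w => by
          rw [Real.norm_eq_abs, abs_of_nonneg (hρ_nonneg w)]; exact hM w)
    exact (integrableOn_iff_integrable_of_support_subset hρ_supp).mp h1
  set A : ℝ := C * (5/4 : ℝ) ^ (1-β) / (2:ℝ) ^ (2*β-2) with hAdef
  set B : ℝ := C * M * K * (5:ℝ) ^ (1-β) with hBdef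
  have hA0 : 0 ≤ A := by positivity
  have hB0 : 0 ≤ B := by positivity
  refine ⟨A + B, fun δ hδ z => ?_⟩
  set I : ℝ := ∫ w : ℂ, u (z - δ • w) * ρ w with hIdef
  have hI0 : 0 ≤ I :=
    integral_nonneg fun w => mul_nonneg (hu_nonneg _) (hρ_nonneg w)
  set P : ℝ := (‖z‖ ^ 2 + δ ^ 2) ^ (1-β) with hPdef
  have hP0 : 0 ≤ P := Real.rpow_nonneg (by positivity) _
  have hexp : 2*β - 2 ≤ 0 := by linarith
  rcases le_or_gt (2*δ) ‖z‖ with hcase | hcase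
  · -- far from the origin
    have hz0 : 0 < ‖z‖ := by linarith
    set c₁ : ℝ := C * (‖z‖/2) ^ (2*β-2) with hc₁
    have hbd : ∀ w : ℂ, u (z - δ • w) * ρ w ≤ c₁ * ρ w := by
      intro w
      by_cases hw : ρ w = 0
      · rw [hw, mul_zero, mul_zero]
      · have hw1 : ‖w‖ ≤ 1 := by
          have := hρ_supp (Function.mem_support.mpr hw)
          simpa [Complex.dist_eq] using this
        have hlow : ‖z‖/2 ≤ ‖z - δ • w‖ := by
          have h1 : ‖z‖ - ‖δ • w‖ ≤ ‖z - δ • w‖ := norm_sub_norm_le _ _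
          have h2 : ‖δ • w‖ ≤ δ := by
            rw [norm_smul, Real.norm_eq_abs, abs_of_pos hδ]
            nlinarith
          nlinarith
        have hne : z - δ • w ≠ 0 := by
          intro h
          rw [h, norm_zero] at hlow
          linarith
        have : u (z - δ • w) ≤ c₁ := by
          refine le_trans (hu_bd _ hne) ?_
          rw [hc₁]
          exact mul_le_mul_of_nonneg_left
            (Real.rpow_le_rpow_of_nonpos (by linarith) hlow hexp) hC.le
        exact mul_le_mul_of_nonneg_right this (hρ_nonneg w)
    have hint : I ≤ c₁ := by
      have := integral_mono_of_nonneg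
        (Filter.Eventually.of_forall fun w => mul_nonneg (hu_nonneg _) (hρ_nonneg w))
        (hρ_int_able.const_mul c₁) (Filter.Eventually.of_forall hbd)
      rwa [integral_const_mul, hρ_int, mul_one] at this
    have hPle : P ≤ (5/4 : ℝ) ^ (1-β) * ‖z‖ ^ (2-2*β) := by
      have h1 : ‖z‖ ^ 2 + δ ^ 2 ≤ (5/4) * ‖z‖ ^ 2 := by nlinarith
      have h2 : P ≤ ((5/4) * ‖z‖ ^ 2) ^ (1-β) :=
        Real.rpow_le_rpow (by positivity) h1 (by linarith)
      calc P ≤ ((5/4) * ‖z‖ ^ 2) ^ (1-β) := h2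
        _ = (5/4 : ℝ) ^ (1-β) * (‖z‖ ^ 2) ^ (1-β) :=
            Real.mul_rpow (by norm_num) (by positivity)
        _ = (5/4 : ℝ) ^ (1-β) * ‖z‖ ^ (2-2*β) := by
            rw [sqpow_rpow (1-β) (norm_nonneg z)]; ring_nf
    have step : I * P ≤ c₁ * ((5/4 : ℝ) ^ (1-β) * ‖z‖ ^ (2-2*β)) := by
      have hc₁0 : 0 ≤ c₁ := by positivity
      calc I * P ≤ c₁ * P := mul_le_mul_of_nonneg_right hint hP0
        _ ≤ c₁ * ((5/4 : ℝ) ^ (1-β) * ‖z‖ ^ (2-2*β)) :=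
            mul_le_mul_of_nonneg_left hPle hc₁0
    have heq : c₁ * ((5/4 : ℝ) ^ (1-β) * ‖z‖ ^ (2-2*β)) = A := by
      have h1 : ‖z‖ ^ (2*β-2) * ‖z‖ ^ (2-2*β) = 1 := by
        rw [← Real.rpow_add hz0]
        norm_num
      rw [hc₁, Real.div_rpow (norm_nonneg z) (by norm_num : (0:ℝ) ≤ 2)]
      calc C * (‖z‖ ^ (2*β-2) / (2:ℝ) ^ (2*β-2)) * ((5/4 : ℝ) ^ (1-β) * ‖z‖ ^ (2-2*β))
          = C * (5/4 : ℝ) ^ (1-β) / (2:ℝ) ^ (2*β-2) * (‖z‖ ^ (2*β-2) * ‖z‖ ^ (2-2*β)) := by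
            ring
        _ = A := by rw [h1, mul_one, hAdef]
    calc I * P ≤ A := by rw [← heq]; exact step
      _ ≤ A + B := le_add_of_nonneg_right hB0
  · -- close to the origin
    have hδ2 : (0:ℝ) < δ^(2*β-2) := Real.rpow_pos_of_pos hδ _
    set G : ℂ → ℝ := fun w => (C * M * δ^(2*β-2)) * Hk (δ⁻¹ • z - w) with hGdef
    have hG_int : Integrable G := (hHk_int.comp_sub_left (δ⁻¹ • z)).const_mul _
    have hG_nonneg : ∀ w, 0 ≤ G w := fun w => by
      exact mul_nonneg (by positivity) (hHk_nonneg _)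
    have hbd : ∀ᵐ w : ℂ, u (z - δ • w) * ρ w ≤ G w := by
      have hsing : ∀ᵐ w : ℂ, w ≠ δ⁻¹ • z := by
        have h0 : volume ({δ⁻¹ • z} : Set ℂ) = 0 := measure_singleton _
        have h1 : ∀ᵐ w : ℂ, w ∉ ({δ⁻¹ • z} : Set ℂ) := measure_eq_zero_iff_ae_notMem.mp h0
        exact h1.mono fun w h => by simpa using h
      filter_upwards [hsing] with w hw
      by_cases hρw : ρ w = 0
      · rw [hρw, mul_zero]; exact hG_nonneg w
      · have hw1 : ‖w‖ ≤ 1 := by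
          have := hρ_supp (Function.mem_support.mpr hρw)
          simpa [Complex.dist_eq] using this
        have hδne : (δ:ℝ) ≠ 0 := hδ.ne'
        have hfact : z - δ • w = δ • (δ⁻¹ • z - w) := by
          rw [smul_sub, smul_smul, mul_inv_cancel₀ hδne, one_smul]
        have hne : z - δ • w ≠ 0 := by
          rw [hfact]
          intro h
          rcases smul_eq_zero.mp h with h' | h'
          · exact hδne h'
          · exact hw (sub_eq_zero.mp h').symm
        have hnorm : ‖z - δ • w‖ = δ * ‖δ⁻¹ • z - w‖ := by
          rw [hfact, norm_smul, Real.norm_eq_abs, abs_of_pos hδ]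
        have hmem : δ⁻¹ • z - w ∈ Metric.closedBall (0:ℂ) 3 := by
          rw [Metric.mem_closedBall, Complex.dist_eq, sub_zero]
          have h1 : ‖δ⁻¹ • z - w‖ ≤ ‖δ⁻¹ • z‖ + ‖w‖ := norm_sub_le _ _
          have h2 : ‖δ⁻¹ • z‖ ≤ 2 := by
            rw [norm_smul, Real.norm_eq_abs, abs_of_pos (inv_pos.mpr hδ)]
            rw [inv_mul_le_iff₀ hδ]
            linarith
          calc ‖δ⁻¹ • z - w‖ = ‖δ⁻¹ • z - w‖ := rfl
            _ ≤ 3 := by linarith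
        have hHkval : Hk (δ⁻¹ • z - w) = ‖δ⁻¹ • z - w‖ ^ (2*β-2) := by
          rw [hHk, Set.indicator_of_mem hmem]
        have hub : u (z - δ • w) ≤ C * δ^(2*β-2) * Hk (δ⁻¹ • z - w) := by
          refine le_trans (hu_bd _ hne) ?_
          rw [hnorm, Real.mul_rpow hδ.le (norm_nonneg _), hHkval]
          exact le_of_eq (by ring)
        calc u (z - δ • w) * ρ w ≤ (C * δ^(2*β-2) * Hk (δ⁻¹ • z - w)) * M := by
              exact mul_le_mul hub (hM w) (hρ_nonneg w)
                (mul_nonneg (mul_nonneg hC.le hδ2.le) (hHk_nonneg _))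
          _ = G w := by rw [hGdef]; ring
    have hint : I ≤ C * M * δ^(2*β-2) * K := by
      have h1 := integral_mono_of_nonneg
        (Filter.Eventually.of_forall fun w => mul_nonneg (hu_nonneg _) (hρ_nonneg w))
        hG_int hbd
      have h2 : ∫ w : ℂ, G w = C * M * δ^(2*β-2) * K := by
        rw [hGdef]
        rw [integral_const_mul]
        rw [integral_sub_left_eq_self Hk volume (δ⁻¹ • z)]
      rwa [h2] at h1
    have hPle : P ≤ (5:ℝ) ^ (1-β) * δ ^ (2-2*β) := by
      have h1 : ‖z‖ ^ 2 + δ ^ 2 ≤ 5 * δ ^ 2 := by nlinarith [norm_nonneg z]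
      calc P ≤ (5 * δ ^ 2) ^ (1-β) := Real.rpow_le_rpow (by positivity) h1 (by linarith)
        _ = (5:ℝ) ^ (1-β) * (δ ^ 2) ^ (1-β) := Real.mul_rpow (by norm_num) (by positivity)
        _ = (5:ℝ) ^ (1-β) * δ ^ (2-2*β) := by
            rw [sqpow_rpow (1-β) hδ.le]; ring_nf
    have hδδ : δ^(2*β-2) * δ ^ (2-2*β) = 1 := by
      rw [← Real.rpow_add hδ]; norm_num
    calc I * P ≤ (C * M * δ^(2*β-2) * K) * ((5:ℝ) ^ (1-β) * δ ^ (2-2*β)) := by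
          refine mul_le_mul hint hPle hP0 ?_
          positivity
      _ = B := by
          rw [hBdef]
          calc (C * M * δ^(2*β-2) * K) * ((5:ℝ) ^ (1-β) * δ ^ (2-2*β))
              = C * M * K * (5:ℝ) ^ (1-β) * (δ^(2*β-2) * δ ^ (2-2*β)) := by ring
            _ = C * M * K * (5:ℝ) ^ (1-β) := by rw [hδδ, mul_one]
      _ ≤ A + B := le_add_of_nonneg_left hA0
end
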